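/- Let t > 0, m ≥ 1, Δt := t/m, and suppose Δt ≤ Δx. Let Y₀, Ỹ₀ ∈ H̃, and assume the Lipschitz condition |S_x Y₀ − S_y Y₀|_{H̃} ≤ C₀ |x − y| for all x, y ≥ 0, where C₀ > 0 is a constant. Then, with T := Id + (Δt/Δx)(S_{Δx} − Id) and M := sup_{0 ≤ u ≤ mΔx} ‖S_u‖_op, one has |T^m Ỹ₀ − S_t Y₀|_{H̃} ≤ C₀ √(t (Δx − Δt)) + M |Ỹ₀ − Y₀|_{H̃}. -/

import Mathlib

open Set

set_option maxHeartbeats 1000000 in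
set_option synthInstance.maxHeartbeats 400000 in
/-- Convergence of the iterated finite-difference operator applied to the
approximate initial condition: with `T := Id + (Δt/Δx)(S_{Δx} − Id)`, `Δt = t/m ≤ Δx`, and
`M := sup_{0 ≤ u ≤ mΔx} ‖S_u‖_op`, if `u ↦ S_u Y₀` is Lipschitz with constant `C₀`, then
`|T^m Ỹ₀ − S_t Y₀| ≤ C₀ √(t(Δx − Δt)) + M |Ỹ₀ − Y₀|`. -/
theorem stmt_15 {E : Type*} [NormedAddCommGroup E] [InnerProductSpace ℝ E] [CompleteSpace E]
    [SecondCountableTopology E]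
    (S : ℝ → E →L[ℝ] E) (hS0 : S 0 = 1)
    (hSadd : ∀ u v : ℝ, 0 ≤ u → 0 ≤ v → S (u + v) = (S u).comp (S v))
    (hbdd : ∀ r : ℝ, BddAbove ((fun u => ‖S u‖) '' Icc 0 r))
    (t : ℝ) (ht : 0 < t) (m : ℕ) (hm : 1 ≤ m)
    (Δx : ℝ) (hΔx : t / m ≤ Δx)
    (T : E →L[ℝ] E) (hT : T = 1 + (t / m / Δx) • (S Δx - 1))
    (M : ℝ) (hM : M = sSup ((fun u => ‖S u‖) '' Icc (0 : ℝ) (m * Δx)))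
    (Y₀ Yt : E) (C₀ : ℝ) (hC₀ : 0 < C₀)
    (hLip : ∀ x y : ℝ, 0 ≤ x → 0 ≤ y → ‖S x Y₀ - S y Y₀‖ ≤ C₀ * |x - y|) :
    ‖(T ^ m) Yt - S t Y₀‖ ≤ C₀ * Real.sqrt (t * (Δx - t / m)) + M * ‖Yt - Y₀‖ := by
  have hm0 : (0:ℝ) < m := by exact_mod_cast Nat.pos_of_ne_zero (by omega)
  have hΔt0 : 0 < t / m := div_pos ht hm0
  have hΔx0 : 0 < Δx := lt_of_lt_of_le hΔt0 hΔx
  set lam : ℝ := t / m / Δx with hlam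
  have hlam0 : 0 < lam := div_pos hΔt0 hΔx0
  have hlam1 : lam ≤ 1 := (div_le_one hΔx0).2 hΔx
  set b : ℕ → ℝ := fun k => (m.choose k : ℝ) * lam ^ k * (1 - lam) ^ (m - k) with hb
  have hbnn : ∀ k, 0 ≤ b k := fun k =>
    mul_nonneg (mul_nonneg (Nat.cast_nonneg _) (pow_nonneg hlam0.le _))
      (pow_nonneg (by linarith) _)
  -- sum of weights is 1
  have hsum1 : ∑ k ∈ Finset.range (m+1), b k = 1 := by
    have h := congrArg (Polynomial.eval lam) (bernsteinPolynomial.sum ℝ m)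
    simpa [Polynomial.eval_finset_sum, bernsteinPolynomial, hb] using h
  -- variance identity
  have hvar : ∑ k ∈ Finset.range (m+1), ((m:ℝ) * lam - k) ^ 2 * b k
      = m * lam * (1 - lam) := by
    have h := congrArg (Polynomial.eval lam) (bernsteinPolynomial.variance ℝ m)
    simpa [Polynomial.eval_finset_sum, bernsteinPolynomial, hb, nsmul_eq_mul] using h
  -- power of the semigroup element
  have hSpow : ∀ k : ℕ, S Δx ^ k = S ((k:ℝ) * Δx) := by
    intro k; induction k with
    | zero => simp [hS0]
    | succ n ih =>
      have h1 : ((n+1:ℕ):ℝ) * Δx = (n:ℝ)*Δx + Δx := by push_cast; ring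
      rw [pow_succ, ih, h1, hSadd _ _ (by positivity) hΔx0.le]
      rfl
  -- binomial expansion of T^m
  have hTeq : T = (1 - lam) • (1 : E →L[ℝ] E) + lam • S Δx := by
    rw [hT, smul_sub, sub_smul, one_smul]; abel
  have hcomm : Commute (lam • S Δx) ((1 - lam) • (1 : E →L[ℝ] E)) :=
    ((Commute.one_right (S Δx)).smul_left _).smul_right _
  have hTpow : T ^ m = ∑ k ∈ Finset.range (m+1), b k • S ((k:ℝ) * Δx) := by
    rw [hTeq, add_comm, hcomm.add_pow]
    refine Finset.sum_congr rfl fun k hk => ?_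
    rw [smul_pow, smul_pow, one_pow, hSpow k, smul_mul_assoc, mul_smul_comm, mul_one,
      smul_smul]
    rw [← (Nat.cast_commute (m.choose k) _).eq, ← nsmul_eq_mul, ← Nat.cast_smul_eq_nsmul ℝ,
      smul_smul, hb]
    ring_nf
  -- decomposition
  have hdecomp : (T ^ m) Yt - S t Y₀
      = (∑ k ∈ Finset.range (m+1), b k • (S ((k:ℝ)*Δx)) (Yt - Y₀))
        + (∑ k ∈ Finset.range (m+1), b k • ((S ((k:ℝ)*Δx)) Y₀ - S t Y₀)) := by
    have hap : (T ^ m) Yt = ∑ k ∈ Finset.range (m+1), b k • (S ((k:ℝ)*Δx)) Yt := by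
      rw [hTpow]; simp
    have h1 : S t Y₀ = ∑ k ∈ Finset.range (m+1), b k • S t Y₀ := by
      rw [← Finset.sum_smul, hsum1, one_smul]
    rw [hap]
    nth_rewrite 1 [h1]
    rw [← Finset.sum_sub_distrib, ← Finset.sum_add_distrib]
    refine Finset.sum_congr rfl fun k _ => ?_
    rw [map_sub, smul_sub, smul_sub]
    abel
  -- operator norm bound
  have hMb : ∀ k ∈ Finset.range (m+1), ‖S ((k:ℝ)*Δx)‖ ≤ M := by
    intro k hk
    rw [hM]
    refine le_csSup (hbdd _) ⟨(k:ℝ)*Δx, ⟨by positivity, ?_⟩, rfl⟩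
    have hk' : (k:ℝ) ≤ m := by exact_mod_cast Nat.lt_succ_iff.mp (Finset.mem_range.mp hk)
    exact mul_le_mul_of_nonneg_right hk' hΔx0.le
  have hMnn : 0 ≤ M := le_trans (norm_nonneg _) (hMb 0 (Finset.mem_range.mpr (by omega)))
  -- first sum: M bound
  have key1 : ‖∑ k ∈ Finset.range (m+1), b k • (S ((k:ℝ)*Δx)) (Yt - Y₀)‖
      ≤ M * ‖Yt - Y₀‖ := by
    calc ‖∑ k ∈ Finset.range (m+1), b k • (S ((k:ℝ)*Δx)) (Yt - Y₀)‖
        ≤ ∑ k ∈ Finset.range (m+1), ‖b k • (S ((k:ℝ)*Δx)) (Yt - Y₀)‖ :=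
          norm_sum_le _ _
      _ ≤ ∑ k ∈ Finset.range (m+1), b k * (M * ‖Yt - Y₀‖) := by
          refine Finset.sum_le_sum fun k hk => ?_
          rw [norm_smul, Real.norm_eq_abs, abs_of_nonneg (hbnn k)]
          refine mul_le_mul_of_nonneg_left ?_ (hbnn k)
          exact le_trans ((S _).le_opNorm _)
            (mul_le_mul_of_nonneg_right (hMb k hk) (norm_nonneg _))
      _ = M * ‖Yt - Y₀‖ := by rw [← Finset.sum_mul, hsum1, one_mul]
  -- second moment computation
  have hmom : ∑ k ∈ Finset.range (m+1), b k * ((k:ℝ)*Δx - t)^2 = t * (Δx - t/m) := by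
    have hd : ∀ k : ℕ, ((k:ℝ)*Δx - t)^2 = Δx^2 * ((m:ℝ)*lam - k)^2 := by
      intro k
      have h0 : (m:ℝ) * lam * Δx = t := by
        rw [hlam]; field_simp
      rw [← h0]; ring
    calc ∑ k ∈ Finset.range (m+1), b k * ((k:ℝ)*Δx - t)^2
        = Δx^2 * ∑ k ∈ Finset.range (m+1), ((m:ℝ)*lam - k)^2 * b k := by
          rw [Finset.mul_sum]; exact Finset.sum_congr rfl fun k _ => by rw [hd k]; ring
      _ = Δx^2 * ((m:ℝ) * lam * (1 - lam)) := by rw [hvar]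
      _ = t * (Δx - t/m) := by rw [hlam]; field_simp
  -- Cauchy–Schwarz
  have hCS : ∑ k ∈ Finset.range (m+1), b k * |(k:ℝ)*Δx - t|
      ≤ Real.sqrt (t * (Δx - t/m)) := by
    have h := Real.sum_mul_le_sqrt_mul_sqrt (Finset.range (m+1))
      (fun k => Real.sqrt (b k)) (fun k => Real.sqrt (b k) * |(k:ℝ)*Δx - t|)
    have e1 : ∀ k, Real.sqrt (b k) * (Real.sqrt (b k) * |(k:ℝ)*Δx - t|)
        = b k * |(k:ℝ)*Δx - t| := by
      intro k; rw [← mul_assoc, Real.mul_self_sqrt (hbnn k)]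
    have e2 : ∀ k, Real.sqrt (b k) ^ 2 = b k := fun k => Real.sq_sqrt (hbnn k)
    have e3 : ∀ k, (Real.sqrt (b k) * |(k:ℝ)*Δx - t|) ^ 2 = b k * ((k:ℝ)*Δx - t)^2 := by
      intro k; rw [mul_pow, Real.sq_sqrt (hbnn k), sq_abs]
    simp only [e1, e2, e3] at h
    rw [hsum1, hmom, Real.sqrt_one, one_mul] at h
    exact h
  -- second sum: Lipschitz bound
  have key2 : ‖∑ k ∈ Finset.range (m+1), b k • ((S ((k:ℝ)*Δx)) Y₀ - S t Y₀)‖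
      ≤ C₀ * Real.sqrt (t * (Δx - t/m)) := by
    calc ‖∑ k ∈ Finset.range (m+1), b k • ((S ((k:ℝ)*Δx)) Y₀ - S t Y₀)‖
        ≤ ∑ k ∈ Finset.range (m+1), ‖b k • ((S ((k:ℝ)*Δx)) Y₀ - S t Y₀)‖ :=
          norm_sum_le _ _
      _ ≤ ∑ k ∈ Finset.range (m+1), b k * (C₀ * |(k:ℝ)*Δx - t|) := by
          refine Finset.sum_le_sum fun k hk => ?_
          rw [norm_smul, Real.norm_eq_abs, abs_of_nonneg (hbnn k)]
          exact mul_le_mul_of_nonneg_left (hLip _ _ (by positivity) ht.le) (hbnn k)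
      _ = C₀ * ∑ k ∈ Finset.range (m+1), b k * |(k:ℝ)*Δx - t| := by
          rw [Finset.mul_sum]; exact Finset.sum_congr rfl fun k _ => by ring
      _ ≤ C₀ * Real.sqrt (t * (Δx - t/m)) :=
          mul_le_mul_of_nonneg_left hCS hC₀.le
  calc ‖(T ^ m) Yt - S t Y₀‖
      ≤ ‖∑ k ∈ Finset.range (m+1), b k • (S ((k:ℝ)*Δx)) (Yt - Y₀)‖
        + ‖∑ k ∈ Finset.range (m+1), b k • ((S ((k:ℝ)*Δx)) Y₀ - S t Y₀)‖ := by
        rw [hdecomp]; exact norm_add_le _ _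
    _ ≤ M * ‖Yt - Y₀‖ + C₀ * Real.sqrt (t * (Δx - t/m)) := add_le_add key1 key2
    _ = C₀ * Real.sqrt (t * (Δx - t/m)) + M * ‖Yt - Y₀‖ := by ring
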